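/- Let G = Sp(y₁,…,y_d) be a spider with d ≥ 3 legs, each of length y_i ≥ 2, and size q = y₁+⋯+y_d. If d(d+1) > 2(2q−1), then χ_la(G) = d+2. -/

import Mathlib

open SimpleGraph

/-- The induced vertex sum of an edge labeling. -/
noncomputable def vertexSum {V : Type*} (G : SimpleGraph V) (f : Sym2 V → ℕ) (x : V) : ℕ :=
  ∑ᶠ y ∈ G.neighborSet x, f s(x, y)

/-- `f` is a local antimagic labeling of `G`. -/
def IsLocalAntimagic {V : Type*} (G : SimpleGraph V) (f : Sym2 V → ℕ) : Prop :=
  Set.BijOn f G.edgeSet (Set.Icc 1 G.edgeSet.ncard) ∧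
  ∀ ⦃x y : V⦄, G.Adj x y → vertexSum G f x ≠ vertexSum G f y

/-- The number of distinct induced vertex labels of `f`. -/
noncomputable def colorCount {V : Type*} (G : SimpleGraph V) (f : Sym2 V → ℕ) : ℕ :=
  (Set.range (vertexSum G f)).ncard

/-- The local antimagic chromatic number. -/
noncomputable def chiLA {V : Type*} (G : SimpleGraph V) : ℕ :=
  sInf {n | ∃ f : Sym2 V → ℕ, IsLocalAntimagic G f ∧ colorCount G f = n}

/-- A pendant vertex: a vertex of degree 1. -/
def IsPendant {V : Type*} (G : SimpleGraph V) (x : V) : Prop :=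
  (G.neighborSet x).ncard = 1

/-- A pendant edge: an edge incident to a pendant vertex. -/
def IsPendantEdge {V : Type*} (G : SimpleGraph V) (e : Sym2 V) : Prop :=
  e ∈ G.edgeSet ∧ ∃ x ∈ e, IsPendant G x

/-- The spider graph with `d` legs of lengths `y i`: the core is `none`, and leg `i`
consists of vertices `some ⟨i, j⟩` for `j : Fin (y i)`, forming a path from the core. -/
def spider (d : ℕ) (y : Fin d → ℕ) : SimpleGraph (Option (Σ i : Fin d, Fin (y i))) :=
  SimpleGraph.fromRel (fun u v =>
    ∃ (i : Fin d) (j : Fin (y i)), (u = none ∧ v = some ⟨i, j⟩ ∧ (j : ℕ) = 0) ∨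
      (∃ k : Fin (y i), u = some ⟨i, j⟩ ∧ v = some ⟨i, k⟩ ∧ (j : ℕ) + 1 = (k : ℕ)))

namespace Sp
variable {d : ℕ} {y : Fin d → ℕ}
lemma smk_fst {i i' : Fin d} {a : Fin (y i)} {b : Fin (y i')}
    (h : (⟨i, a⟩ : Σ i, Fin (y i)) = ⟨i', b⟩) : i = i' := congrArg Sigma.fst h
lemma smk_snd {i i' : Fin d} {a : Fin (y i)} {b : Fin (y i')}
    (h : (⟨i, a⟩ : Σ i, Fin (y i)) = ⟨i', b⟩) : (a : ℕ) = (b : ℕ) :=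
  congrArg (fun x : Σ i : Fin d, Fin (y i) => (x.2 : ℕ)) h
lemma smk_eq {i : Fin d} {a b : Fin (y i)} (h : (a : ℕ) = (b : ℕ)) :
    (⟨i, a⟩ : Σ i, Fin (y i)) = ⟨i, b⟩ := by rw [show a = b from Fin.ext h]
def pvert (i : Fin d) (j : Fin (y i)) : Option (Σ i : Fin d, Fin (y i)) :=
  if (j : ℕ) = 0 then none
  else some ⟨i, ⟨(j : ℕ) - 1, lt_of_le_of_lt (Nat.sub_le _ _) j.isLt⟩⟩
def sedge (i : Fin d) (j : Fin (y i)) : Sym2 (Option (Σ i : Fin d, Fin (y i))) :=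
  s(pvert i j, some ⟨i, j⟩)
lemma sedge_def (i : Fin d) (j : Fin (y i)) : sedge i j = s(pvert i j, some ⟨i, j⟩) := rfl
lemma pvert_zero {i : Fin d} {j : Fin (y i)} (h : (j : ℕ) = 0) : pvert i j = none := by
  rw [pvert, if_pos h]
lemma pvert_succ {i : Fin d} {j j' : Fin (y i)} (hj' : (j' : ℕ) + 1 = (j : ℕ)) :
    pvert i j = some ⟨i, j'⟩ := by
  rw [pvert, if_neg (by omega)]
  have hv : (j : ℕ) - 1 = (j' : ℕ) := by omega
  exact congrArg _ (smk_eq hv)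
lemma pvert_ne (i : Fin d) (j : Fin (y i)) : pvert i j ≠ some ⟨i, j⟩ := by
  unfold pvert; split
  · simp
  · intro h
    have h2 := smk_snd (Option.some.inj h)
    have h3 : (j : ℕ) - 1 = (j : ℕ) := h2
    omega
lemma adj_iff {u v : Option (Σ i : Fin d, Fin (y i))} :
    (spider d y).Adj u v ↔
      (∃ (i : Fin d) (j : Fin (y i)), ((j : ℕ) = 0 ∧
        ((u = none ∧ v = some ⟨i, j⟩) ∨ (v = none ∧ u = some ⟨i, j⟩)))) ∨
      (∃ (i : Fin d) (j k : Fin (y i)), (j : ℕ) + 1 = (k : ℕ) ∧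
        ((u = some ⟨i, j⟩ ∧ v = some ⟨i, k⟩) ∨ (v = some ⟨i, j⟩ ∧ u = some ⟨i, k⟩))) := by
  rw [spider, SimpleGraph.fromRel_adj]
  constructor
  · rintro ⟨hne, h | h⟩
    · rcases h with ⟨i, j, ⟨h1, h2, h3⟩ | ⟨k, h1, h2, h3⟩⟩
      · exact Or.inl ⟨i, j, h3, Or.inl ⟨h1, h2⟩⟩
      · exact Or.inr ⟨i, j, k, h3, Or.inl ⟨h1, h2⟩⟩
    · rcases h with ⟨i, j, ⟨h1, h2, h3⟩ | ⟨k, h1, h2, h3⟩⟩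
      · exact Or.inl ⟨i, j, h3, Or.inr ⟨h1, h2⟩⟩
      · exact Or.inr ⟨i, j, k, h3, Or.inr ⟨h1, h2⟩⟩
  · rintro (⟨i, j, h0, ⟨h1, h2⟩ | ⟨h1, h2⟩⟩ | ⟨i, j, k, hjk, ⟨h1, h2⟩ | ⟨h1, h2⟩⟩)
    · subst h1; subst h2; exact ⟨by simp, Or.inl ⟨i, j, Or.inl ⟨rfl, rfl, h0⟩⟩⟩
    · subst h1; subst h2; exact ⟨by simp, Or.inr ⟨i, j, Or.inl ⟨rfl, rfl, h0⟩⟩⟩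
    · subst h1; subst h2
      refine ⟨?_, Or.inl ⟨i, j, Or.inr ⟨k, rfl, rfl, hjk⟩⟩⟩
      intro h; have := smk_snd (Option.some.inj h); omega
    · subst h1; subst h2
      refine ⟨?_, Or.inr ⟨i, j, Or.inr ⟨k, rfl, rfl, hjk⟩⟩⟩
      intro h; have := smk_snd (Option.some.inj h); omega

lemma mem_nbhd {u v : Option (Σ i : Fin d, Fin (y i))} :
    v ∈ (spider d y).neighborSet u ↔ (spider d y).Adj u v := Iff.rfl

lemma nbhd_none (h0 : ∀ i, 0 < y i) :
    (spider d y).neighborSet none =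
      ↑(Finset.univ.image fun i : Fin d => (some ⟨i, ⟨0, h0 i⟩⟩ : Option (Σ i : Fin d, Fin (y i)))) := by
  ext v
  rw [mem_nbhd, adj_iff]
  simp only [Finset.coe_image, Finset.coe_univ, Set.image_univ, Set.mem_range]
  constructor
  · rintro (⟨i, j, h0', ⟨-, h2⟩ | ⟨h1, h2⟩⟩ | ⟨i, j, k, hjk, ⟨h1, -⟩ | ⟨-, h1⟩⟩)
    · exact ⟨i, by rw [h2]; exact congrArg _ (smk_eq (by simp [h0'])).symm⟩
    · exact absurd h2 (by simp)
    · exact absurd h1 (by simp)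
    · exact absurd h1 (by simp)
  · rintro ⟨i, rfl⟩
    exact Or.inl ⟨i, ⟨0, h0 i⟩, rfl, Or.inl ⟨trivial, rfl⟩⟩

lemma nbhd_mid (i : Fin d) (j k : Fin (y i)) (hk : (j : ℕ) + 1 = (k : ℕ)) :
    (spider d y).neighborSet (some ⟨i, j⟩) = {pvert i j, some ⟨i, k⟩} := by
  ext v
  rw [mem_nbhd, adj_iff]
  simp only [Set.mem_insert_iff, Set.mem_singleton_iff]
  constructor
  · rintro (⟨i', j', h0', ⟨h1, -⟩ | ⟨h1, h2⟩⟩ | ⟨i', j', k', hjk, ⟨h1, h2⟩ | ⟨h1, h2⟩⟩)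
    · exact absurd h1 (by simp)
    · have hj0 : (j : ℕ) = 0 := by
        have := smk_snd (Option.some.inj h2); omega
      left; rw [h1, pvert_zero hj0]
    · obtain rfl := smk_fst (Option.some.inj h1)
      have hj : (j : ℕ) = (j' : ℕ) := smk_snd (Option.some.inj h1)
      right; rw [h2]
      exact congrArg _ (smk_eq (by omega)).symm
    · obtain rfl := smk_fst (Option.some.inj h2)
      have hj : (j : ℕ) = (k' : ℕ) := smk_snd (Option.some.inj h2)
      left; rw [h1, pvert_succ (show (j' : ℕ) + 1 = (j : ℕ) by omega)]
  · rintro (rfl | rfl)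
    · by_cases hj0 : (j : ℕ) = 0
      · rw [pvert_zero hj0]
        exact Or.inl ⟨i, j, hj0, Or.inr ⟨rfl, rfl⟩⟩
      · rw [pvert, if_neg hj0]
        refine Or.inr ⟨i, _, j, ?_, Or.inr ⟨rfl, rfl⟩⟩
        show (j : ℕ) - 1 + 1 = (j : ℕ); omega
    · exact Or.inr ⟨i, j, k, hk, Or.inl ⟨rfl, rfl⟩⟩

lemma nbhd_last (i : Fin d) (j : Fin (y i)) (hj : (j : ℕ) + 1 = y i) :
    (spider d y).neighborSet (some ⟨i, j⟩) = {pvert i j} := by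
  ext v
  rw [mem_nbhd, adj_iff]
  simp only [Set.mem_singleton_iff]
  constructor
  · rintro (⟨i', j', h0', ⟨h1, -⟩ | ⟨h1, h2⟩⟩ | ⟨i', j', k', hjk, ⟨h1, h2⟩ | ⟨h1, h2⟩⟩)
    · exact absurd h1 (by simp)
    · have hj0 : (j : ℕ) = 0 := by
        have := smk_snd (Option.some.inj h2); omega
      rw [h1, pvert_zero hj0]
    · obtain rfl := smk_fst (Option.some.inj h1)
      have hjv : (j : ℕ) = (j' : ℕ) := smk_snd (Option.some.inj h1)
      exact absurd k'.isLt (by omega)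
    · obtain rfl := smk_fst (Option.some.inj h2)
      have hjv : (j : ℕ) = (k' : ℕ) := smk_snd (Option.some.inj h2)
      rw [h1, pvert_succ (show (j' : ℕ) + 1 = (j : ℕ) by omega)]
  · rintro rfl
    by_cases hj0 : (j : ℕ) = 0
    · rw [pvert_zero hj0]
      exact Or.inl ⟨i, j, hj0, Or.inr ⟨rfl, rfl⟩⟩
    · rw [pvert, if_neg hj0]
      refine Or.inr ⟨i, _, j, ?_, Or.inr ⟨rfl, rfl⟩⟩
      show (j : ℕ) - 1 + 1 = (j : ℕ); omega

lemma vsum_none (h0 : ∀ i, 0 < y i) (f : Sym2 (Option (Σ i : Fin d, Fin (y i))) → ℕ) :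
    vertexSum (spider d y) f none = ∑ i : Fin d, f (sedge i ⟨0, h0 i⟩) := by
  rw [vertexSum, nbhd_none h0, finsum_mem_coe_finset, Finset.sum_image]
  · exact Finset.sum_congr rfl fun i _ => by rw [sedge_def, pvert_zero rfl]
  · intro a _ b _ h
    exact smk_fst (Option.some.inj h)

lemma vsum_mid (i : Fin d) (j k : Fin (y i)) (hk : (j : ℕ) + 1 = (k : ℕ))
    (f : Sym2 (Option (Σ i : Fin d, Fin (y i))) → ℕ) :
    vertexSum (spider d y) f (some ⟨i, j⟩) = f (sedge i j) + f (sedge i k) := by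
  rw [vertexSum, nbhd_mid i j k hk, finsum_mem_pair]
  · congr 1
    · rw [sedge_def, Sym2.eq_swap]
    · rw [sedge_def, pvert_succ hk]
  · intro h
    rw [pvert] at h
    split at h
    · exact absurd h (by simp)
    · have h2 := smk_snd (Option.some.inj h)
      have h3 : (j : ℕ) - 1 = (k : ℕ) := h2
      omega

lemma vsum_last (i : Fin d) (j : Fin (y i)) (hj : (j : ℕ) + 1 = y i)
    (f : Sym2 (Option (Σ i : Fin d, Fin (y i))) → ℕ) :
    vertexSum (spider d y) f (some ⟨i, j⟩) = f (sedge i j) := by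
  rw [vertexSum, nbhd_last i j hj, finsum_mem_singleton, sedge_def, Sym2.eq_swap]
end Sp

namespace Sp2
open Sp
variable {d : ℕ} {y : Fin d → ℕ}

lemma sedge_mem (i : Fin d) (j : Fin (y i)) : sedge i j ∈ (spider d y).edgeSet := by
  rw [sedge_def, SimpleGraph.mem_edgeSet, adj_iff]
  by_cases hj0 : (j : ℕ) = 0
  · rw [pvert_zero hj0]
    exact Or.inl ⟨i, j, hj0, Or.inl ⟨rfl, rfl⟩⟩
  · rw [pvert, if_neg hj0]
    refine Or.inr ⟨i, _, j, ?_, Or.inl ⟨rfl, rfl⟩⟩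
    show (j : ℕ) - 1 + 1 = (j : ℕ); omega

lemma edgeSet_eq :
    (spider d y).edgeSet = Set.range (fun p : Σ i : Fin d, Fin (y i) => sedge p.1 p.2) := by
  ext e
  induction e with
  | _ u v =>
    constructor
    · intro he
      rw [SimpleGraph.mem_edgeSet, adj_iff] at he
      rcases he with ⟨i, j, h0, ⟨h1, h2⟩ | ⟨h1, h2⟩⟩ | ⟨i, j, k, hjk, ⟨h1, h2⟩ | ⟨h1, h2⟩⟩
      · exact ⟨⟨i, j⟩, by show sedge i j = _; rw [sedge_def, pvert_zero h0, h1, h2]⟩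
      · exact ⟨⟨i, j⟩, by show sedge i j = _; rw [sedge_def, pvert_zero h0, h1, h2, Sym2.eq_swap]⟩
      · exact ⟨⟨i, k⟩, by show sedge i k = _; rw [sedge_def, pvert_succ hjk, h1, h2]⟩
      · exact ⟨⟨i, k⟩, by show sedge i k = _; rw [sedge_def, pvert_succ hjk, h1, h2, Sym2.eq_swap]⟩
    · rintro ⟨⟨i, j⟩, h⟩
      rw [← h]
      exact sedge_mem i j

lemma sedge_inj : Function.Injective (fun p : Σ i : Fin d, Fin (y i) => sedge p.1 p.2) := by
  rintro ⟨i, j⟩ ⟨i', j'⟩ h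
  simp only [sedge_def] at h
  rw [Sym2.eq_iff] at h
  rcases h with ⟨h1, h2⟩ | ⟨h1, h2⟩
  · exact Option.some.inj h2
  · by_cases c1 : (j : ℕ) = 0
    · rw [pvert_zero c1] at h1; exact absurd h1 (by simp)
    by_cases c2 : (j' : ℕ) = 0
    · rw [pvert_zero c2] at h2; exact absurd h2 (by simp)
    rw [pvert, if_neg c1] at h1
    rw [pvert, if_neg c2] at h2
    have e1 := Option.some.inj h1
    obtain rfl := smk_fst e1
    have e2 := Option.some.inj h2
    have v1 : (j : ℕ) - 1 = (j' : ℕ) := smk_snd e1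
    have v2 : (j : ℕ) = (j' : ℕ) - 1 := smk_snd e2
    omega

lemma edge_ncard : (spider d y).edgeSet.ncard = ∑ i : Fin d, y i := by
  rw [edgeSet_eq, ← Set.image_univ, ← Finset.coe_univ, ← Finset.coe_image,
    Set.ncard_coe_finset, Finset.card_image_of_injective _ sedge_inj, Finset.card_univ,
    Fintype.card_sigma]
  simp

end Sp2

namespace Sp3
open Sp Sp2

lemma sum_distinct : ∀ (n : ℕ) (s : Finset ℕ), s.card = n → (∀ x ∈ s, 1 ≤ x) →
    n * (n + 1) ≤ 2 * ∑ x ∈ s, x := by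
  intro n
  induction n with
  | zero => intro s _ _; simp
  | succ n ih =>
    intro s hcard hpos
    have hne : s.Nonempty := Finset.card_pos.mp (by omega)
    set M := s.max' hne with hM
    have hMs : M ∈ s := s.max'_mem hne
    have hsub : s ⊆ Finset.Icc 1 M := by
      intro x hx
      exact Finset.mem_Icc.mpr ⟨hpos x hx, s.le_max' x hx⟩
    have hcardle : s.card ≤ M := by
      have := Finset.card_le_card hsub
      simpa using this
    have herase : (s.erase M).card = n := by
      rw [Finset.card_erase_of_mem hMs, hcard]
      omega
    have hsum : M + ∑ x ∈ s.erase M, x = ∑ x ∈ s, x := Finset.add_sum_erase s id hMs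
    have hih := ih (s.erase M) herase (fun x hx => hpos x (Finset.mem_of_mem_erase hx))
    calc (n + 1) * (n + 1 + 1) = n * (n + 1) + 2 * (n + 1) := by ring
    _ ≤ 2 * (∑ x ∈ s.erase M, x) + 2 * M := add_le_add hih (by omega)
    _ = 2 * ∑ x ∈ s, x := by omega

variable {d : ℕ} {y : Fin d → ℕ}

lemma lower_bound (hd : 3 ≤ d) (hy : ∀ i, 2 ≤ y i)
    (hineq : d * (d + 1) > 2 * (2 * (∑ i : Fin d, y i) - 1))
    (f : Sym2 (Option (Σ i : Fin d, Fin (y i))) → ℕ)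
    (hf : IsLocalAntimagic (spider d y) f) :
    d + 2 ≤ colorCount (spider d y) f := by
  set q := ∑ i : Fin d, y i with hq
  have h0 : ∀ i, 0 < y i := fun i => lt_of_lt_of_le (by norm_num) (hy i)
  have hq2d : 2 * d ≤ q := by
    calc 2 * d = ∑ _i : Fin d, 2 := by simp [mul_comm]
    _ ≤ q := Finset.sum_le_sum (fun i _ => hy i)
  have hq1 : 1 ≤ q := by omega
  obtain ⟨hbij, hnadj⟩ := hf
  rw [edge_ncard] at hbij
  -- pendant vertices
  have lastlt : ∀ i : Fin d, y i - 1 < y i := fun i => by have := h0 i; omega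
  set last : ∀ i : Fin d, Fin (y i) := fun i => ⟨y i - 1, lastlt i⟩ with hlast
  have lastv : ∀ i, ((last i : ℕ)) + 1 = y i := fun i => by
    show y i - 1 + 1 = y i; have := h0 i; omega
  set pend : Fin d → ℕ := fun i => f (sedge i (last i)) with hpend
  have pend_mem : ∀ i, pend i ∈ Set.Icc 1 q := fun i => hbij.1 (sedge_mem i (last i))
  have pend_inj : ∀ i i' : Fin d, pend i = pend i' → i = i' := by
    intro i i' h
    have := hbij.2.1 (sedge_mem i (last i)) (sedge_mem i' (last i')) h
    exact smk_fst (sedge_inj this)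
  -- core sum
  set C := ∑ i : Fin d, f (sedge i ⟨0, h0 i⟩) with hC
  have hCv : vertexSum (spider d y) f none = C := vsum_none h0 f
  have core_inj : ∀ i i' : Fin d,
      f (sedge i ⟨0, h0 i⟩) = f (sedge i' ⟨0, h0 i'⟩) → i = i' := by
    intro i i' h
    have := hbij.2.1 (sedge_mem i _) (sedge_mem i' _) h
    exact smk_fst (sedge_inj this)
  have hCbig : 2 * q ≤ C := by
    have himg : (Finset.univ.image fun i : Fin d => f (sedge i ⟨0, h0 i⟩)).card = d := by
      rw [Finset.card_image_of_injective _ (fun i i' h => core_inj i i' h), Finset.card_univ,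
        Fintype.card_fin]
    have hsum : ∑ x ∈ Finset.univ.image (fun i : Fin d => f (sedge i ⟨0, h0 i⟩)), x = C := by
      rw [Finset.sum_image (fun a _ b _ h => core_inj a b h)]
    have hpos : ∀ x ∈ Finset.univ.image (fun i : Fin d => f (sedge i ⟨0, h0 i⟩)), 1 ≤ x := by
      intro x hx
      obtain ⟨i, -, rfl⟩ := Finset.mem_image.mp hx
      exact (hbij.1 (sedge_mem i _)).1
    have := sum_distinct d _ himg hpos
    rw [hsum] at this
    omega
  -- witness vertex with sum q + u
  obtain ⟨x, u, hxu, hu1, hu2⟩ : ∃ x u, vertexSum (spider d y) f x = q + u ∧ 1 ≤ u ∧ u ≤ q - 1 := by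
    obtain ⟨e, he, hfe⟩ := hbij.2.2 (Set.mem_Icc.mpr ⟨hq1, le_rfl⟩)
    rw [edgeSet_eq] at he
    obtain ⟨⟨i, j⟩, he'⟩ := he
    have hfe2 : f (sedge i j) = q := by rw [← he'] at hfe; exact hfe
    have hubound : ∀ (j' : Fin (y i)), (⟨i, j'⟩ : Σ i, Fin (y i)) ≠ ⟨i, j⟩ →
        1 ≤ f (sedge i j') ∧ f (sedge i j') ≤ q - 1 := by
      intro j' hne
      have hmem := hbij.1 (sedge_mem i j')
      have hne2 : f (sedge i j') ≠ q := by
        intro hcon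
        apply hne
        exact sedge_inj (hbij.2.1 (sedge_mem i j') (sedge_mem i j) (by rw [hcon, hfe2]))
      exact ⟨hmem.1, by have := hmem.2; omega⟩
    by_cases hpe : (j : ℕ) + 1 = y i
    · -- pendant edge; use the inner endpoint
      have hj1 : 1 ≤ (j : ℕ) := by have := hy i; omega
      have hj0lt : (j : ℕ) - 1 < y i := by omega
      set j0 : Fin (y i) := ⟨(j : ℕ) - 1, hj0lt⟩ with hj0
      have hmid := vsum_mid i j0 j (show (j : ℕ) - 1 + 1 = (j : ℕ) by omega) f
      have hb := hubound j0 (fun hcon => by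
        have h2 : (j : ℕ) - 1 = (j : ℕ) := smk_snd hcon; omega)
      exact ⟨some ⟨i, j0⟩, f (sedge i j0), by rw [hmid, hfe2, Nat.add_comm], hb.1, hb.2⟩
    · have hlt : (j : ℕ) + 1 < y i := lt_of_le_of_ne j.isLt hpe
      set k : Fin (y i) := ⟨(j : ℕ) + 1, hlt⟩ with hk
      have hmid := vsum_mid i j k rfl f
      have hb := hubound k (fun hcon => by
        have h2 : (j : ℕ) + 1 = (j : ℕ) := smk_snd hcon; omega)
      exact ⟨some ⟨i, j⟩, f (sedge i k), by rw [hmid, hfe2], hb.1, hb.2⟩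
  -- assemble d + 2 distinct colors
  set P : Finset ℕ := Finset.univ.image pend with hP
  have hPcard : P.card = d := by
    rw [Finset.card_image_of_injective _ (fun i i' h => pend_inj i i' h), Finset.card_univ,
      Fintype.card_fin]
  have hPle : ∀ v ∈ P, v ≤ q := by
    intro v hv
    obtain ⟨i, -, rfl⟩ := Finset.mem_image.mp hv
    exact (pend_mem i).2
  set T : Finset ℕ := insert (q + u) (insert C P) with hT
  have hTcard : T.card = d + 2 := by
    rw [hT, Finset.card_insert_of_notMem, Finset.card_insert_of_notMem, hPcard]
    · intro h
      exact absurd (hPle C h) (by omega)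
    · intro h
      rcases Finset.mem_insert.mp h with h | h
      · omega
      · exact absurd (hPle _ h) (by omega)
  have hTsub : (↑T : Set ℕ) ⊆ Set.range (vertexSum (spider d y) f) := by
    intro v hv
    simp only [hT, Finset.coe_insert, Set.mem_insert_iff, Finset.mem_coe] at hv
    rcases hv with rfl | hv
    · exact ⟨x, hxu⟩
    rcases hv with rfl | hv
    · exact ⟨none, hCv⟩
    · obtain ⟨i, -, rfl⟩ := Finset.mem_image.mp hv
      exact ⟨some ⟨i, last i⟩, vsum_last i (last i) (lastv i) f⟩
  calc d + 2 = T.card := hTcard.symm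
  _ = (↑T : Set ℕ).ncard := (Set.ncard_coe_finset T).symm
  _ ≤ (Set.range (vertexSum (spider d y) f)).ncard :=
      Set.ncard_le_ncard hTsub (Set.finite_range _)
  _ = colorCount (spider d y) f := rfl

end Sp3

namespace Sp4
open Sp Sp2 Sp3

/-- the zigzag sequence `q, 1, q-1, 2, q-2, ...` -/
def zig (q p : ℕ) : ℕ := if p % 2 = 0 then q - p / 2 else p / 2 + 1

lemma zig_zero (q : ℕ) : zig q 0 = q := by simp [zig]

lemma zig_pos {q p : ℕ} (h : p < q) : 1 ≤ zig q p := by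
  unfold zig; split <;> omega

lemma zig_le {q p : ℕ} (h : p < q) : zig q p ≤ q := by
  unfold zig; split <;> omega

lemma zig_sum {q p : ℕ} (h : p + 1 < q) : zig q p + zig q (p + 1) = q + 1 - p % 2 := by
  unfold zig; split <;> split <;> omega

lemma zig_inj {q a b : ℕ} (ha : a < q) (hb : b < q) (h : zig q a = zig q b) : a = b := by
  unfold zig at h; split at h <;> split at h <;> omega

variable {d : ℕ} {y : Fin d → ℕ}

def Y (y : Fin d → ℕ) (k : ℕ) : ℕ := if h : k < d then y ⟨k, h⟩ else 0

def off (y : Fin d → ℕ) (n : ℕ) : ℕ := ∑ k ∈ Finset.range n, Y y k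

lemma Y_coe (i : Fin d) : Y y (i : ℕ) = y i := by
  rw [Y, dif_pos i.isLt, Fin.eta]

lemma off_succ (n : ℕ) : off y (n + 1) = off y n + Y y n := Finset.sum_range_succ _ _

lemma off_mono {m n : ℕ} (h : m ≤ n) : off y m ≤ off y n :=
  Finset.sum_le_sum_of_subset (Finset.range_subset_range.mpr h)

lemma off_d : off y d = ∑ i : Fin d, y i := by
  rw [off, ← Fin.sum_univ_eq_sum_range]
  exact Finset.sum_congr rfl fun i _ => Y_coe i

/-- position of edge `(i,j)` counted from the pendant end of leg `i`. -/
def posr (y : Fin d → ℕ) (i : Fin d) (j : Fin (y i)) : ℕ := off y i + (y i - 1 - (j : ℕ))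

lemma posr_lb (i : Fin d) (j : Fin (y i)) : off y (i : ℕ) ≤ posr y i j := Nat.le_add_right _ _

lemma posr_ub (i : Fin d) (j : Fin (y i)) : posr y i j < off y ((i : ℕ) + 1) := by
  rw [off_succ, Y_coe]
  have := j.isLt
  rw [posr]; omega

lemma posr_lt (i : Fin d) (j : Fin (y i)) : posr y i j < ∑ i : Fin d, y i :=
  calc posr y i j < off y ((i : ℕ) + 1) := posr_ub i j
  _ ≤ off y d := off_mono i.isLt
  _ = _ := off_d

lemma posr_inj {i i' : Fin d} {j : Fin (y i)} {j' : Fin (y i')}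
    (h : posr y i j = posr y i' j') : (⟨i, j⟩ : Σ i, Fin (y i)) = ⟨i', j'⟩ := by
  have hii : i = i' := by
    by_contra hne
    have hvne : (i : ℕ) ≠ (i' : ℕ) := fun hc => hne (Fin.ext hc)
    rcases Nat.lt_or_ge (i : ℕ) (i' : ℕ) with hlt | hge
    · have h1 := posr_ub i j
      have h2 := off_mono (y := y) (show (i : ℕ) + 1 ≤ (i' : ℕ) from hlt)
      have h3 := posr_lb i' j'
      omega
    · have hlt' : (i' : ℕ) < (i : ℕ) := by omega
      have h1 := posr_ub i' j'
      have h2 := off_mono (y := y) (show (i' : ℕ) + 1 ≤ (i : ℕ) from hlt')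
      have h3 := posr_lb i j
      omega
  subst hii
  rw [posr, posr] at h
  have hj := j.isLt
  have hj' := j'.isLt
  exact smk_eq (by omega)

lemma posr_succ {i : Fin d} {j k : Fin (y i)} (hjk : (j : ℕ) + 1 = (k : ℕ)) :
    posr y i j = posr y i k + 1 := by
  rw [posr, posr]
  have := k.isLt
  omega

lemma upper (hd : 3 ≤ d) (hy : ∀ i, 2 ≤ y i)
    (hineq : d * (d + 1) > 2 * (2 * (∑ i : Fin d, y i) - 1)) :
    ∃ f, IsLocalAntimagic (spider d y) f ∧ colorCount (spider d y) f ≤ d + 2 := by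
  set q := ∑ i : Fin d, y i with hq
  have h0 : ∀ i, 0 < y i := fun i => by have := hy i; omega
  have hd0 : 0 < d := by omega
  have hq2d : 2 * d ≤ q := by
    calc 2 * d = ∑ _i : Fin d, 2 := by simp [mul_comm]
    _ ≤ q := Finset.sum_le_sum (fun i _ => hy i)
  have hq1 : 1 ≤ q := by omega
  have posr_lt' : ∀ (i : Fin d) (j : Fin (y i)), posr y i j < q := fun i j => posr_lt i j
  set L : (Σ i : Fin d, Fin (y i)) → ℕ := fun p => zig q (posr y p.1 p.2) with hL
  have L_eq : ∀ (i : Fin d) (j : Fin (y i)), L ⟨i, j⟩ = zig q (posr y i j) := fun i j => rfl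
  have L_inj : Function.Injective L := by
    rintro ⟨i, j⟩ ⟨i', j'⟩ h
    rw [L_eq, L_eq] at h
    exact posr_inj (zig_inj (posr_lt' i j) (posr_lt' i' j') h)
  have L_mem : ∀ p : Σ i : Fin d, Fin (y i), L p ∈ Set.Icc 1 q := by
    rintro ⟨i, j⟩
    rw [L_eq]
    exact ⟨zig_pos (posr_lt' i j), zig_le (posr_lt' i j)⟩
  have L_surj : ∀ v ∈ Set.Icc 1 q, ∃ p, L p = v := by
    have hsub : Finset.univ.image L ⊆ Finset.Icc 1 q := by
      intro v hv
      obtain ⟨p, -, rfl⟩ := Finset.mem_image.mp hv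
      exact Finset.mem_Icc.mpr ⟨(L_mem p).1, (L_mem p).2⟩
    have hcard : (Finset.Icc 1 q).card ≤ (Finset.univ.image L).card := by
      rw [Finset.card_image_of_injective _ L_inj, Finset.card_univ, Fintype.card_sigma,
        Nat.card_Icc]
      simp
      exact hq.le
    have heq := Finset.eq_of_subset_of_card_le hsub hcard
    intro v hv
    have hv' : v ∈ Finset.Icc 1 q := Finset.mem_Icc.mpr ⟨hv.1, hv.2⟩
    rw [← heq] at hv'
    obtain ⟨p, -, hp⟩ := Finset.mem_image.mp hv'
    exact ⟨p, hp⟩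
  -- the edge labeling
  set f : Sym2 (Option (Σ i : Fin d, Fin (y i))) → ℕ :=
    fun e => ∑ p : Σ i : Fin d, Fin (y i), if e = sedge p.1 p.2 then L p else 0 with hf
  have f_edge : ∀ (i : Fin d) (j : Fin (y i)), f (sedge i j) = L ⟨i, j⟩ := by
    intro i j
    rw [hf]
    show (∑ p : Σ i : Fin d, Fin (y i), if sedge i j = sedge p.1 p.2 then L p else 0) = L ⟨i, j⟩
    rw [Finset.sum_eq_single (⟨i, j⟩ : Σ i : Fin d, Fin (y i))]
    · rw [if_pos rfl]
    · rintro ⟨i', j'⟩ - hne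
      rw [if_neg]
      intro hc
      exact hne (sedge_inj hc.symm)
    · intro h; exact absurd (Finset.mem_univ _) h
  -- vertex sums
  have lastlt : ∀ i : Fin d, y i - 1 < y i := fun i => by have := h0 i; omega
  have lastv : ∀ i : Fin d, ((⟨y i - 1, lastlt i⟩ : Fin (y i)) : ℕ) + 1 = y i := fun i => by
    show y i - 1 + 1 = y i; have := h0 i; omega
  set CoreS := ∑ i : Fin d, L ⟨i, ⟨0, h0 i⟩⟩ with hCoreS
  have vs_core : vertexSum (spider d y) f none = CoreS := by
    rw [vsum_none h0 f]
    exact Finset.sum_congr rfl fun i _ => f_edge i _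
  have vs_pend : ∀ i : Fin d,
      vertexSum (spider d y) f (some ⟨i, ⟨y i - 1, lastlt i⟩⟩) = L ⟨i, ⟨y i - 1, lastlt i⟩⟩ :=
    fun i => by rw [vsum_last i _ (lastv i) f, f_edge]
  have vs_mid : ∀ (i : Fin d) (j k : Fin (y i)), (j : ℕ) + 1 = (k : ℕ) →
      vertexSum (spider d y) f (some ⟨i, j⟩) = q + 1 - (posr y i k) % 2 := by
    intro i j k hk
    rw [vsum_mid i j k hk f, f_edge, f_edge, L_eq, L_eq, posr_succ hk, add_comm]
    exact zig_sum (by have h1 := posr_lt' i j; have h2 := posr_succ hk; omega)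
  -- core sum is large
  have CoreS_big : 2 * q ≤ CoreS := by
    have hinj : Function.Injective (fun i : Fin d => L ⟨i, ⟨0, h0 i⟩⟩) := by
      intro a a' h
      exact smk_fst (L_inj h)
    have himg : (Finset.univ.image fun i : Fin d => L ⟨i, ⟨0, h0 i⟩⟩).card = d := by
      rw [Finset.card_image_of_injective _ hinj, Finset.card_univ, Fintype.card_fin]
    have hsum : ∑ x ∈ Finset.univ.image (fun i : Fin d => L ⟨i, ⟨0, h0 i⟩⟩), x = CoreS := by
      rw [Finset.sum_image (fun a _ b _ h => hinj h)]
    have hpos : ∀ x ∈ Finset.univ.image (fun i : Fin d => L ⟨i, ⟨0, h0 i⟩⟩), 1 ≤ x := by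
      intro x hx
      obtain ⟨i, -, rfl⟩ := Finset.mem_image.mp hx
      exact (L_mem _).1
    have := sum_distinct d _ himg hpos
    rw [hsum] at this
    omega
  -- the pendant of leg 0 gets label q
  have hLq : L ⟨⟨0, hd0⟩, ⟨y ⟨0, hd0⟩ - 1, lastlt ⟨0, hd0⟩⟩⟩ = q := by
    rw [L_eq]
    have hp0 : posr y ⟨0, hd0⟩ ⟨y ⟨0, hd0⟩ - 1, lastlt ⟨0, hd0⟩⟩ = 0 := by
      show off y ((⟨0, hd0⟩ : Fin d) : ℕ) + (y ⟨0, hd0⟩ - 1 - (y ⟨0, hd0⟩ - 1)) = 0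
      have : off y ((⟨0, hd0⟩ : Fin d) : ℕ) = 0 := by
        show off y 0 = 0
        rw [off, Finset.sum_range_zero]
      omega
    rw [hp0, zig_zero]
  -- bijectivity
  have hbij : Set.BijOn f (spider d y).edgeSet (Set.Icc 1 (spider d y).edgeSet.ncard) := by
    rw [edge_ncard, ← hq]
    refine ⟨?_, ?_, ?_⟩
    · intro e he
      rw [edgeSet_eq] at he
      obtain ⟨⟨i, j⟩, he'⟩ := he
      have : f (sedge i j) ∈ Set.Icc 1 q := by rw [f_edge]; exact L_mem _
      rwa [show sedge i j = e from he'] at this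
    · intro e he e' he' hee
      rw [edgeSet_eq] at he he'
      obtain ⟨⟨i, j⟩, hp⟩ := he
      obtain ⟨⟨i', j'⟩, hp'⟩ := he'
      rw [← hp, ← hp'] at hee ⊢
      have hee2 : L ⟨i, j⟩ = L ⟨i', j'⟩ := by
        rw [← f_edge, ← f_edge]
        exact hee
      have := L_inj hee2
      rw [this]
    · intro v hv
      obtain ⟨⟨i, j⟩, hp⟩ := L_surj v hv
      refine ⟨sedge i j, ?_, ?_⟩
      · exact sedge_mem i j
      · rw [f_edge]; exact hp
  -- local antimagic inequalities
  have key1 : ∀ (i : Fin d) (j : Fin (y i)), (j : ℕ) = 0 →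
      vertexSum (spider d y) f none ≠ vertexSum (spider d y) f (some ⟨i, j⟩) := by
    intro i j hj0
    have h1lt : 1 < y i := hy i
    have hk : (j : ℕ) + 1 = ((⟨1, h1lt⟩ : Fin (y i)) : ℕ) := by
      show (j : ℕ) + 1 = 1; omega
    rw [vs_core, vs_mid i j ⟨1, h1lt⟩ hk]
    omega
  have key2 : ∀ (i : Fin d) (j k : Fin (y i)), (j : ℕ) + 1 = (k : ℕ) →
      vertexSum (spider d y) f (some ⟨i, j⟩) ≠ vertexSum (spider d y) f (some ⟨i, k⟩) := by
    intro i j k hjk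
    by_cases hkend : (k : ℕ) + 1 = y i
    · -- k is the pendant of leg i
      have hkeq : k = ⟨y i - 1, lastlt i⟩ := Fin.ext (by show (k : ℕ) = y i - 1; omega)
      subst hkeq
      rw [vs_mid i j _ hjk, vs_pend i, L_eq]
      have hpq : posr y i ⟨y i - 1, lastlt i⟩ < q := posr_lt' i _
      have hzle : zig q (posr y i ⟨y i - 1, lastlt i⟩) ≤ q := zig_le hpq
      by_cases hp0 : posr y i ⟨y i - 1, lastlt i⟩ = 0
      · rw [hp0, zig_zero]
        omega
      · have hzne : zig q (posr y i ⟨y i - 1, lastlt i⟩) ≠ q := by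
          intro hc
          exact hp0 (zig_inj hpq (by omega) (by rw [hc, zig_zero]))
        omega
    · have hks : (k : ℕ) + 1 < y i := lt_of_le_of_ne k.isLt hkend
      have hmid2 := vs_mid i k ⟨(k : ℕ) + 1, hks⟩ rfl
      rw [vs_mid i j k hjk, hmid2]
      have hstep : posr y i k = posr y i ⟨(k : ℕ) + 1, hks⟩ + 1 := posr_succ rfl
      omega
  have hanti : ∀ ⦃u v : Option (Σ i : Fin d, Fin (y i))⦄, (spider d y).Adj u v →
      vertexSum (spider d y) f u ≠ vertexSum (spider d y) f v := by
    intro u v huv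
    rcases adj_iff.mp huv with ⟨i, j, h0', ⟨rfl, rfl⟩ | ⟨rfl, rfl⟩⟩ |
      ⟨i, j, k, hjk, ⟨rfl, rfl⟩ | ⟨rfl, rfl⟩⟩
    · exact key1 i j h0'
    · exact (key1 i j h0').symm
    · exact key2 i j k hjk
    · exact (key2 i j k hjk).symm
  -- color count
  have hcc : colorCount (spider d y) f ≤ d + 2 := by
    classical
    set P0 : Finset ℕ := Finset.univ.image (fun i : Fin d => L ⟨i, ⟨y i - 1, lastlt i⟩⟩) with hP0
    set T : Finset ℕ := insert (q + 1) (insert CoreS P0) with hT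
    have hmemP : ∀ i : Fin d, L ⟨i, ⟨y i - 1, lastlt i⟩⟩ ∈ T := by
      intro i
      exact Finset.mem_insert.mpr (Or.inr (Finset.mem_insert.mpr (Or.inr
        (Finset.mem_image.mpr ⟨i, Finset.mem_univ i, rfl⟩))))
    have hsub : Set.range (vertexSum (spider d y) f) ⊆ ↑T := by
      rintro v ⟨x, rfl⟩
      match x with
      | none =>
        rw [vs_core]
        exact Finset.mem_coe.mpr (Finset.mem_insert.mpr (Or.inr (Finset.mem_insert_self _ _)))
      | some ⟨i, j⟩ =>
        by_cases hje : (j : ℕ) + 1 = y i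
        · have hjeq : j = ⟨y i - 1, lastlt i⟩ := Fin.ext (by show (j : ℕ) = y i - 1; omega)
          subst hjeq
          rw [vs_pend i]
          exact Finset.mem_coe.mpr (hmemP i)
        · have hlt : (j : ℕ) + 1 < y i := lt_of_le_of_ne j.isLt hje
          rw [vs_mid i j ⟨(j : ℕ) + 1, hlt⟩ rfl]
          rcases Nat.mod_two_eq_zero_or_one (posr y i ⟨(j : ℕ) + 1, hlt⟩) with hm | hm
          · rw [hm]
            exact Finset.mem_coe.mpr (Finset.mem_insert.mpr (Or.inl (by omega)))
          · rw [hm]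
            have : q + 1 - 1 = q := by omega
            rw [this, ← hLq]
            exact Finset.mem_coe.mpr (hmemP _)
    calc colorCount (spider d y) f ≤ (↑T : Set ℕ).ncard :=
          Set.ncard_le_ncard hsub T.finite_toSet
    _ = T.card := Set.ncard_coe_finset T
    _ ≤ (insert CoreS P0).card + 1 := Finset.card_insert_le _ _
    _ ≤ P0.card + 1 + 1 := by have := Finset.card_insert_le CoreS P0; omega
    _ ≤ d + 2 := by
        have h1 : P0.card ≤ d := le_trans Finset.card_image_le (by simp)
        omega
  exact ⟨f, ⟨hbij, hanti⟩, hcc⟩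

end Sp4


theorem stmt5 (d : ℕ) (hd : 3 ≤ d) (y : Fin d → ℕ) (hy : ∀ i, 2 ≤ y i)
    (q : ℕ) (hq : q = ∑ i : Fin d, y i)
    (hineq : d * (d + 1) > 2 * (2 * q - 1)) :
    chiLA (spider d y) = d + 2 := by
  subst hq
  obtain ⟨f, hf, hcc⟩ := Sp4.upper hd hy hineq
  have hlow := Sp3.lower_bound hd hy hineq f hf
  have hex : colorCount (spider d y) f = d + 2 := le_antisymm hcc hlow
  rw [chiLA]
  apply le_antisymm
  · exact Nat.sInf_le ⟨f, hf, hex⟩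
  · have hne : {n | ∃ g, IsLocalAntimagic (spider d y) g ∧ colorCount (spider d y) g = n}.Nonempty :=
      ⟨d + 2, f, hf, hex⟩
    apply le_csInf hne
    rintro n ⟨f', hf', rfl⟩
    exact Sp3.lower_bound hd hy hineq f' hf'
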